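/- Let A ∈ ℝ_{≥0}^{m×n} and B ∈ ℝ_{≥0}^{m'×n'} be entrywise nonnegative matrices, and let A ⊕ B denote the block-diagonal matrix with blocks A and B (and zero off-diagonal blocks). Then τ₊(A ⊕ B) = τ₊(A) + τ₊(B). -/

import Mathlib

open Matrix

/-- The set of atoms `𝒜₊(A)`: rank-at-most-one matrices `R` with `0 ≤ R ≤ A` entrywise. -/
noncomputable def Aplus {m n : Type*} [Fintype m] [Fintype n]
    (A : Matrix m n ℝ) : Set (Matrix m n ℝ) :=
  {R | R.rank ≤ 1 ∧ ∀ i j, 0 ≤ R i j ∧ R i j ≤ A i j}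

/-- `τ₊(A)`: supremum of `L(A)` over linear functionals `L` with `L ≤ 1` on `𝒜₊(A)`. -/
noncomputable def tauPlus {m n : Type*} [Fintype m] [Fintype n]
    (A : Matrix m n ℝ) : ℝ :=
  sSup {x | ∃ L : Matrix m n ℝ →ₗ[ℝ] ℝ, (∀ R ∈ Aplus A, L R ≤ 1) ∧ L A = x}

set_option linter.unusedSectionVars false
set_option maxHeartbeats 1000000

section helpers

variable {p q p' q' : Type*} [Fintype p] [Fintype q] [Fintype p'] [Fintype q']
  [DecidableEq p] [DecidableEq q] [DecidableEq p'] [DecidableEq q']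

lemma rank_submatrix_le_gen (f : p' → p) (e : q' → q) (A : Matrix p q ℝ) :
    (A.submatrix f e).rank ≤ A.rank := by
  have h : A.submatrix f e =
      ((1 : Matrix p p ℝ).submatrix f id) * A * ((1 : Matrix q q ℝ).submatrix id e) := by
    ext i j
    simp [mul_apply, one_apply, Finset.sum_ite_eq, Finset.sum_ite_eq']
  rw [h]
  exact (rank_mul_le_left _ _).trans (rank_mul_le_right _ _)

lemma rank_fromBlocks_ll (R : Matrix p q ℝ) :
    (fromBlocks R 0 0 (0 : Matrix p' q' ℝ)).rank ≤ R.rank := by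
  have h : fromBlocks R 0 0 (0 : Matrix p' q' ℝ) =
      fromRows (1 : Matrix p p ℝ) (0 : Matrix p' p ℝ) * R *
        fromCols (1 : Matrix q q ℝ) (0 : Matrix q q' ℝ) := by
    ext (i | i) (j | j) <;>
      simp [mul_apply, fromRows_apply_inl, fromRows_apply_inr, fromCols_apply_inl, fromCols_apply_inr, one_apply, Finset.sum_ite_eq, Finset.sum_ite_eq']
  rw [h]
  exact (rank_mul_le_left _ _).trans (rank_mul_le_right _ _)

lemma rank_fromBlocks_rr (R : Matrix p' q' ℝ) :
    (fromBlocks (0 : Matrix p q ℝ) 0 0 R).rank ≤ R.rank := by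
  have h : fromBlocks (0 : Matrix p q ℝ) 0 0 R =
      fromRows (0 : Matrix p p' ℝ) (1 : Matrix p' p' ℝ) * R *
        fromCols (0 : Matrix q' q ℝ) (1 : Matrix q' q' ℝ) := by
    ext (i | i) (j | j) <;>
      simp [mul_apply, fromRows_apply_inl, fromRows_apply_inr, fromCols_apply_inl, fromCols_apply_inr, one_apply, Finset.sum_ite_eq, Finset.sum_ite_eq']
  rw [h]
  exact (rank_mul_le_left _ _).trans (rank_mul_le_right _ _)

lemma rank_stdBasisMatrix_le (i : p) (j : q) (c : ℝ) :
    (Matrix.single i j c).rank ≤ 1 := by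
  have h : Matrix.single i j c =
      (Matrix.of fun i' (_ : Fin 1) => if i = i' then c else 0) *
        (Matrix.of fun (_ : Fin 1) j' => if j = j' then (1:ℝ) else 0) := by
    ext i' j'
    simp [mul_apply, Matrix.single]
    split_ifs <;> simp_all
  rw [h]
  refine (rank_mul_le_left _ _).trans ?_
  simpa using rank_le_card_width
    (Matrix.of fun i' (_ : Fin 1) => if i = i' then c else 0)

lemma Aplus_fromBlocks_left {A : Matrix p q ℝ} {B : Matrix p' q' ℝ}
    (hB : ∀ i j, 0 ≤ B i j) {R : Matrix p q ℝ} (hR : R ∈ Aplus A) :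
    fromBlocks R 0 0 0 ∈ Aplus (fromBlocks A 0 0 B) := by
  refine ⟨(rank_fromBlocks_ll R).trans hR.1, ?_⟩
  rintro (i | i) (j | j)
  · simpa using hR.2 i j
  · simp
  · simp
  · simpa using hB i j

lemma Aplus_fromBlocks_right {A : Matrix p q ℝ} {B : Matrix p' q' ℝ}
    (hA : ∀ i j, 0 ≤ A i j) {R : Matrix p' q' ℝ} (hR : R ∈ Aplus B) :
    fromBlocks 0 0 0 R ∈ Aplus (fromBlocks A 0 0 B) := by
  refine ⟨(rank_fromBlocks_rr R).trans hR.1, ?_⟩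
  rintro (i | i) (j | j)
  · simpa using hA i j
  · simp
  · simp
  · simpa using hR.2 i j

lemma Aplus_fromBlocks_split {A : Matrix p q ℝ} {B : Matrix p' q' ℝ}
    {R : Matrix (p ⊕ p') (q ⊕ q') ℝ} (hR : R ∈ Aplus (fromBlocks A 0 0 B)) :
    (∃ S ∈ Aplus A, R = fromBlocks S 0 0 0) ∨ (∃ S ∈ Aplus B, R = fromBlocks 0 0 0 S) := by
  obtain ⟨hrank, hbd⟩ := hR
  have h12 : ∀ i j, R (Sum.inl i) (Sum.inr j) = 0 := fun i j =>
    le_antisymm (by simpa using (hbd (Sum.inl i) (Sum.inr j)).2) (hbd _ _).1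
  have h21 : ∀ i j, R (Sum.inr i) (Sum.inl j) = 0 := fun i j =>
    le_antisymm (by simpa using (hbd (Sum.inr i) (Sum.inl j)).2) (hbd _ _).1
  have key : (∀ i j, R (Sum.inl i) (Sum.inl j) = 0) ∨
      (∀ i j, R (Sum.inr i) (Sum.inr j) = 0) := by
    by_contra hcon
    push_neg at hcon
    obtain ⟨⟨i₁, j₁, ha⟩, ⟨i₂, j₂, hd⟩⟩ := hcon
    set S : Matrix (Fin 2) (Fin 2) ℝ :=
      R.submatrix ![Sum.inl i₁, Sum.inr i₂] ![Sum.inl j₁, Sum.inr j₂] with hS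
    have hdet : S.det ≠ 0 := by
      rw [Matrix.det_fin_two]
      have e00 : S 0 0 = R (Sum.inl i₁) (Sum.inl j₁) := rfl
      have e01 : S 0 1 = R (Sum.inl i₁) (Sum.inr j₂) := rfl
      have e10 : S 1 0 = R (Sum.inr i₂) (Sum.inl j₁) := rfl
      have e11 : S 1 1 = R (Sum.inr i₂) (Sum.inr j₂) := rfl
      rw [e00, e01, e10, e11, h12, h21]
      simpa using mul_ne_zero ha hd
    have h2 : S.rank = 2 := by
      have := Matrix.rank_of_isUnit S
        (by rwa [Matrix.isUnit_iff_isUnit_det, isUnit_iff_ne_zero])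
      simpa using this
    have hle := (rank_submatrix_le_gen ![Sum.inl i₁, Sum.inr i₂]
      ![Sum.inl j₁, Sum.inr j₂] R).trans hrank
    rw [← hS, h2] at hle
    omega
  rcases key with h | h
  · right
    refine ⟨R.submatrix Sum.inr Sum.inr,
      ⟨(rank_submatrix_le_gen _ _ R).trans hrank, fun i j => by
        simpa using hbd (Sum.inr i) (Sum.inr j)⟩, ?_⟩
    ext (i | i) (j | j) <;> simp [h, h12, h21]
  · left
    refine ⟨R.submatrix Sum.inl Sum.inl,
      ⟨(rank_submatrix_le_gen _ _ R).trans hrank, fun i j => by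
        simpa using hbd (Sum.inl i) (Sum.inl j)⟩, ?_⟩
    ext (i | i) (j | j) <;> simp [h, h12, h21]

/-- The `τ₊` feasible-value set. -/
def tauSet (T : Matrix p q ℝ) : Set ℝ :=
  {x | ∃ L : Matrix p q ℝ →ₗ[ℝ] ℝ, (∀ R ∈ Aplus T, L R ≤ 1) ∧ L T = x}

lemma tauPlus_eq_sSup (T : Matrix p q ℝ) : tauPlus T = sSup (tauSet T) := rfl

lemma tauSet_nonempty (T : Matrix p q ℝ) : (tauSet T).Nonempty :=
  ⟨0, 0, fun R _ => by simp, by simp⟩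

lemma stdBasisMatrix_mem_Aplus {T : Matrix p q ℝ} (hT : ∀ i j, 0 ≤ T i j) (i : p) (j : q) :
    Matrix.single i j (T i j) ∈ Aplus T := by
  refine ⟨rank_stdBasisMatrix_le i j _, fun i' j' => ?_⟩
  simp only [Matrix.single, of_apply]
  constructor
  · split_ifs with h
    · exact hT i j
    · exact le_rfl
  · split_ifs with h
    · obtain ⟨rfl, rfl⟩ := h; exact le_rfl
    · exact hT i' j'

lemma bddAbove_tauSet {T : Matrix p q ℝ} (hT : ∀ i j, 0 ≤ T i j) :
    BddAbove (tauSet T) := by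
  refine ⟨(Fintype.card p * Fintype.card q : ℝ), ?_⟩
  rintro x ⟨L, hL, rfl⟩
  have hrep : L T = ∑ i, ∑ j, L (Matrix.single i j (T i j)) := by
    conv_lhs => rw [matrix_eq_sum_single T]
    simp [map_sum]
  rw [hrep]
  calc ∑ i, ∑ j, L (Matrix.single i j (T i j))
      ≤ ∑ (_ : p), ∑ (_ : q), (1:ℝ) := by
        refine Finset.sum_le_sum fun i _ => Finset.sum_le_sum fun j _ => ?_
        exact hL _ (stdBasisMatrix_mem_Aplus hT i j)
    _ = (Fintype.card p * Fintype.card q : ℝ) := by simp [mul_comm]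

/-- Embedding into the top-left block, as a linear map. -/
def embL : Matrix p q ℝ →ₗ[ℝ] Matrix (p ⊕ p') (q ⊕ q') ℝ where
  toFun X := fromBlocks X 0 0 0
  map_add' X Y := by ext (i | i) (j | j) <;> simp
  map_smul' c X := by ext (i | i) (j | j) <;> simp

/-- Embedding into the bottom-right block, as a linear map. -/
def embR : Matrix p' q' ℝ →ₗ[ℝ] Matrix (p ⊕ p') (q ⊕ q') ℝ where
  toFun X := fromBlocks 0 0 0 X
  map_add' X Y := by ext (i | i) (j | j) <;> simp
  map_smul' c X := by ext (i | i) (j | j) <;> simp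

/-- Projection onto the top-left block, as a linear map. -/
def projL : Matrix (p ⊕ p') (q ⊕ q') ℝ →ₗ[ℝ] Matrix p q ℝ where
  toFun M := M.submatrix Sum.inl Sum.inl
  map_add' X Y := by ext i j; simp
  map_smul' c X := by ext i j; simp

/-- Projection onto the bottom-right block, as a linear map. -/
def projR : Matrix (p ⊕ p') (q ⊕ q') ℝ →ₗ[ℝ] Matrix p' q' ℝ where
  toFun M := M.submatrix Sum.inr Sum.inr
  map_add' X Y := by ext i j; simp
  map_smul' c X := by ext i j; simp

@[simp] lemma embL_apply (X : Matrix p q ℝ) :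
    (embL X : Matrix (p ⊕ p') (q ⊕ q') ℝ) = fromBlocks X 0 0 0 := rfl

@[simp] lemma embR_apply (X : Matrix p' q' ℝ) :
    (embR X : Matrix (p ⊕ p') (q ⊕ q') ℝ) = fromBlocks 0 0 0 X := rfl

@[simp] lemma projL_apply (M : Matrix (p ⊕ p') (q ⊕ q') ℝ) :
    projL M = M.submatrix Sum.inl Sum.inl := rfl

@[simp] lemma projR_apply (M : Matrix (p ⊕ p') (q ⊕ q') ℝ) :
    projR M = M.submatrix Sum.inr Sum.inr := rfl

end helpers

/-- additivity on block-diagonal matrices: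
`τ₊(A ⊕ B) = τ₊(A) + τ₊(B)`, where `A ⊕ B = [[A, 0], [0, B]]`. -/
theorem stmt9 {m n m' n' : ℕ}
    (A : Matrix (Fin m) (Fin n) ℝ) (B : Matrix (Fin m') (Fin n') ℝ)
    (hA : ∀ i j, 0 ≤ A i j) (hB : ∀ i j, 0 ≤ B i j) :
    tauPlus (Matrix.fromBlocks A 0 0 B) = tauPlus A + tauPlus B := by
  classical
  have hAB : ∀ i j, 0 ≤ Matrix.fromBlocks A 0 0 B i j := by
    rintro (i | i) (j | j)
    · simpa using hA i j
    · simp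
    · simp
    · simpa using hB i j
  have neA := tauSet_nonempty A
  have neB := tauSet_nonempty B
  have neAB := tauSet_nonempty (Matrix.fromBlocks A 0 0 B)
  have bdA := bddAbove_tauSet hA
  have bdB := bddAbove_tauSet hB
  have bdAB := bddAbove_tauSet hAB
  rw [tauPlus_eq_sSup, tauPlus_eq_sSup, tauPlus_eq_sSup]
  apply le_antisymm
  · refine csSup_le neAB ?_
    rintro x ⟨L, hL, rfl⟩
    have memA : (L ∘ₗ embL) A ∈ tauSet A :=
      ⟨L ∘ₗ embL, fun R hR => hL _ (Aplus_fromBlocks_left hB hR), rfl⟩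
    have memB : (L ∘ₗ embR) B ∈ tauSet B :=
      ⟨L ∘ₗ embR, fun R hR => hL _ (Aplus_fromBlocks_right hA hR), rfl⟩
    have hsplit : L (Matrix.fromBlocks A 0 0 B) = (L ∘ₗ embL) A + (L ∘ₗ embR) B := by
      have h : Matrix.fromBlocks A 0 0 B =
          Matrix.fromBlocks A 0 0 0 + Matrix.fromBlocks 0 0 0 B := by
        ext (i | i) (j | j) <;> simp
      rw [h, map_add]
      rfl
    rw [hsplit]
    exact add_le_add (le_csSup bdA memA) (le_csSup bdB memB)
  · have comb : ∀ a ∈ tauSet A, ∀ b ∈ tauSet B,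
        a + b ∈ tauSet (Matrix.fromBlocks A 0 0 B) := by
      rintro a ⟨LA, hLA, rfl⟩ b ⟨LB, hLB, rfl⟩
      set L' : Matrix (Fin m ⊕ Fin m') (Fin n ⊕ Fin n') ℝ →ₗ[ℝ] ℝ :=
        LA ∘ₗ projL + LB ∘ₗ projR with hL'
      refine ⟨L', ?_, ?_⟩
      · intro R hR
        rcases Aplus_fromBlocks_split hR with ⟨S, hS, rfl⟩ | ⟨S, hS, rfl⟩
        · have h1 : (Matrix.fromBlocks S 0 0 (0 : Matrix (Fin m') (Fin n') ℝ)).submatrix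
              Sum.inl Sum.inl = S := by ext i j; simp
          have h2 : (Matrix.fromBlocks S 0 0 (0 : Matrix (Fin m') (Fin n') ℝ)).submatrix
              Sum.inr Sum.inr = 0 := by ext i j; simp
          have hval : L' (Matrix.fromBlocks S 0 0 0) = LA S := by
            simp [hL', LinearMap.add_apply, LinearMap.comp_apply, h1, h2]
          rw [hval]
          exact hLA S hS
        · have h1 : (Matrix.fromBlocks (0 : Matrix (Fin m) (Fin n) ℝ) 0 0 S).submatrix
              Sum.inl Sum.inl = 0 := by ext i j; simp
          have h2 : (Matrix.fromBlocks (0 : Matrix (Fin m) (Fin n) ℝ) 0 0 S).submatrix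
              Sum.inr Sum.inr = S := by ext i j; simp
          have hval : L' (Matrix.fromBlocks 0 0 0 S) = LB S := by
            simp [hL', LinearMap.add_apply, LinearMap.comp_apply, h1, h2]
          rw [hval]
          exact hLB S hS
      · have h1 : (Matrix.fromBlocks A 0 0 B).submatrix Sum.inl Sum.inl = A := by
          ext i j; simp
        have h2 : (Matrix.fromBlocks A 0 0 B).submatrix Sum.inr Sum.inr = B := by
          ext i j; simp
        simp [hL', LinearMap.add_apply, LinearMap.comp_apply, h1, h2]
    have step1 : ∀ a ∈ tauSet A,
        a + sSup (tauSet B) ≤ sSup (tauSet (Matrix.fromBlocks A 0 0 B)) := by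
      intro a ha
      have h : sSup (tauSet B) ≤ sSup (tauSet (Matrix.fromBlocks A 0 0 B)) - a := by
        refine csSup_le neB fun b hb => ?_
        have := le_csSup bdAB (comb a ha b hb)
        linarith
      linarith
    have step2 : sSup (tauSet A) ≤
        sSup (tauSet (Matrix.fromBlocks A 0 0 B)) - sSup (tauSet B) := by
      refine csSup_le neA fun a ha => ?_
      have := step1 a ha
      linarith
    linarith
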